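/- arXiv:2605.12148 — 4 statements merged into one kernel-verified Lean document; each statement's English description precedes it below -/
import Mathlib

section
/- Let n = 2^r with r ≥ 2, ν = 2^{r-1} − 1, and define Δ_i as ±C(ν, ⌊i/2⌋) with sign + if i ≡ 0,3 (mod 4) and − if i ≡ 1,2 (mod 4). Then for every even i with 0 < i ≤ n, the integer C(n,i) + (n−1)(Δ_{i−1} + Δ_i) is divisible by n, and for every odd i with 1 ≤ i ≤ n−1, the integer C(n,i) is divisible by n. -/
open Polynomial Finset

/-- The sequence `Δ_i = ±C(ν, ⌊i/2⌋)`, with sign `+` if `i ≡ 0, 3 (mod 4)`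
and `-` if `i ≡ 1, 2 (mod 4)`. -/
def Delta (ν i : ℕ) : ℤ :=
  if i % 4 = 0 ∨ i % 4 = 3 then (ν.choose (i / 2) : ℤ) else -(ν.choose (i / 2) : ℤ)

lemma lemA (s k : ℕ) (hk : Odd k) : 2 ^ s ∣ (2 ^ s).choose k := by
  obtain ⟨c, rfl⟩ := hk
  have hp : 0 < 2 ^ s := pow_pos (by norm_num) s
  have h1 : 2 ^ s = Nat.succ (2 ^ s - 1) := by omega
  have h2 := (Nat.add_one_mul_choose_eq (2 ^ s - 1) (2 * c) : Nat.succ (2 ^ s - 1) * (2 ^ s - 1).choose (2 * c) = (Nat.succ (2 ^ s - 1)).choose (Nat.succ (2 * c)) * Nat.succ (2 * c))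
  rw [← h1] at h2
  have hd : 2 ^ s ∣ (2 ^ s).choose (2 * c + 1) * (2 * c + 1) := ⟨_, h2.symm⟩
  have hcop : Nat.Coprime (2 ^ s) (2 * c + 1) :=
    (Nat.Coprime.pow_right s ((Nat.coprime_two_right).mpr ⟨c, rfl⟩)).symm
  exact Nat.Coprime.dvd_of_dvd_mul_right hcop hd

lemma coeff_one_sub_sq (m j : ℕ) :
    (((1 : ℤ[X]) - X ^ 2) ^ m).coeff (2 * j) = (-1) ^ j * (m.choose j : ℤ) := by
  have h : ((1 : ℤ[X]) - X ^ 2) ^ m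
      = ∑ k ∈ range (m + 1), Polynomial.C ((-1 : ℤ) ^ k * (m.choose k : ℤ)) * X ^ (2 * k) := by
    rw [sub_eq_add_neg, add_comm, add_pow]
    apply Finset.sum_congr rfl
    intro k _
    rw [neg_pow, one_pow, mul_one, ← pow_mul]
    simp only [map_mul, map_pow, map_neg, map_one, Polynomial.C_eq_natCast]
    ring
  rw [h, finset_sum_coeff]
  rw [Finset.sum_eq_single j]
  · rw [coeff_C_mul, coeff_X_pow, if_pos rfl, mul_one]
  · intro b _ hb
    rw [coeff_C_mul, coeff_X_pow, if_neg (by omega), mul_zero]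
  · intro h
    simp only [Finset.mem_range, not_lt] at h
    rw [Nat.choose_eq_zero_of_lt (by omega : m < j)]
    simp
lemma coeff_one_sub (m k : ℕ) :
    (((1 : ℤ[X]) - X) ^ m).coeff k = (-1) ^ k * (m.choose k : ℤ) := by
  have h : ((1 : ℤ[X]) - X) ^ m = Polynomial.C ((-1 : ℤ) ^ m) * (X + Polynomial.C (-1)) ^ m := by
    rw [map_pow, ← mul_pow]; congr 1; simp; ring
  rw [h, coeff_C_mul, coeff_X_add_C_pow]
  by_cases hk : k ≤ m
  · rw [← mul_assoc, ← pow_add, show m + (m - k) = k + 2 * (m - k) by omega, pow_add, pow_mul]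
    norm_num
  · rw [Nat.choose_eq_zero_of_lt (by omega : m < k)]
    simp

lemma altVandermonde (m j : ℕ) :
    ∑ p ∈ Finset.HasAntidiagonal.antidiagonal (2 * j), (-1 : ℤ) ^ p.1 * (m.choose p.1 : ℤ) * (m.choose p.2 : ℤ)
      = (-1) ^ j * (m.choose j : ℤ) := by
  have key : (((1 : ℤ[X]) - X) ^ m * ((1 : ℤ[X]) + X) ^ m) = ((1 : ℤ[X]) - X ^ 2) ^ m := by
    rw [← mul_pow]; ring_nf
  have h2 := congrArg (fun p => Polynomial.coeff p (2 * j)) key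
  simp only [coeff_mul, coeff_one_sub_sq] at h2
  rw [← h2]
  apply Finset.sum_congr rfl
  intro p _
  rw [coeff_one_sub, coeff_one_add_X_pow]

lemma mainEven (r : ℕ) (hr : 2 ≤ r) (j : ℕ) :
    (2 ^ r : ℤ) ∣ ((2 ^ r).choose (2 * j) : ℤ) - (-1) ^ j * ((2 ^ (r - 1)).choose j : ℤ) := by
  set m := 2 ^ (r - 1) with hm
  have hmm : 2 ^ r = m + m := by
    rw [hm, ← two_mul, ← pow_succ']
    congr 1; omega
  rw [hmm, Nat.add_choose_eq, ← altVandermonde m j]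
  push_cast
  rw [← Finset.sum_sub_distrib]
  apply Finset.dvd_sum
  intro p hp
  rcases Nat.even_or_odd p.1 with he | ho
  · have h1 : ((-1 : ℤ)) ^ p.1 = 1 := he.neg_one_pow
    rw [h1]; ring_nf; exact dvd_zero _
  · have hb : Odd p.2 := by
      have hmem := Finset.HasAntidiagonal.mem_antidiagonal.mp hp
      rcases ho with ⟨t, ht⟩
      exact ⟨j - t - 1, by omega⟩
    obtain ⟨a, ha⟩ : ((2:ℤ) ^ (r-1)) ∣ (m.choose p.1 : ℤ) := by
      exact_mod_cast Int.natCast_dvd_natCast.mpr (lemA (r-1) p.1 ho)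
    obtain ⟨b, hb2⟩ : ((2:ℤ) ^ (r-1)) ∣ (m.choose p.2 : ℤ) := by
      exact_mod_cast Int.natCast_dvd_natCast.mpr (lemA (r-1) p.2 hb)
    rw [ho.neg_one_pow]
    have heq : ((m.choose p.1 : ℤ)) * (m.choose p.2 : ℤ)
        - -1 * (m.choose p.1 : ℤ) * (m.choose p.2 : ℤ)
        = 2 ^ ((r-1) + (r-1) + 1) * (a * b) := by rw [ha, hb2]; ring
    rw [heq]
    exact Dvd.dvd.mul_right (pow_dvd_pow 2 (by omega)) _

lemma deltaSum (ν j : ℕ) (hj : 1 ≤ j) :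
    Delta ν (2 * j - 1) + Delta ν (2 * j) = (-1 : ℤ) ^ j * ((ν + 1).choose j : ℤ) := by
  have h1 : (2 * j - 1) / 2 = j - 1 := by omega
  have h2 : (2 * j) / 2 = j := by omega
  have hps : (ν + 1).choose j = ν.choose (j - 1) + ν.choose j := by
    obtain ⟨j', rfl⟩ : ∃ j', j = j' + 1 := ⟨j - 1, by omega⟩
    simp [Nat.choose_succ_succ]
  rcases Nat.even_or_odd j with he | ho
  · have h3 : (2 * j - 1) % 4 = 3 := by obtain ⟨t, rfl⟩ := he; omega
    have h4 : (2 * j) % 4 = 0 := by obtain ⟨t, rfl⟩ := he; omega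
    rw [Delta, Delta, if_pos (Or.inr h3), if_pos (Or.inl h4), h1, h2, he.neg_one_pow, hps]
    push_cast; ring
  · have h3 : (2 * j - 1) % 4 = 1 := by obtain ⟨t, rfl⟩ := ho; omega
    have h4 : (2 * j) % 4 = 2 := by obtain ⟨t, rfl⟩ := ho; omega
    rw [Delta, Delta, if_neg (by omega), if_neg (by omega), h1, h2, ho.neg_one_pow, hps]
    push_cast; ring

theorem stmt_6 (r : ℕ) (hr : 2 ≤ r) (n ν : ℕ) (hn : n = 2 ^ r) (hν : ν = 2 ^ (r - 1) - 1) :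
    (∀ i : ℕ, Even i → 0 < i → i ≤ n →
      (n : ℤ) ∣ ((n.choose i : ℤ) + (n - 1) * (Delta ν (i - 1) + Delta ν i))) ∧
    (∀ i : ℕ, Odd i → 1 ≤ i → i ≤ n - 1 → (n : ℤ) ∣ (n.choose i : ℤ)) := by
  have h2m : 2 ≤ 2 ^ (r - 1) := by
    have h := Nat.pow_le_pow_right (by norm_num : 1 ≤ 2) (by omega : 1 ≤ r - 1)
    simpa using h
  have hν1 : ν + 1 = 2 ^ (r - 1) := by omega
  constructor
  · intro i hie hipos _
    obtain ⟨j, hj⟩ : ∃ j, i = 2 * j := by rcases hie with ⟨t, ht⟩; exact ⟨t, by omega⟩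
    have hj1 : 1 ≤ j := by omega
    subst hj hn
    rw [show 2 * j - 1 = 2 * j - 1 from rfl, deltaSum ν j hj1, hν1]
    have key := mainEven r hr j
    set D : ℤ := (-1 : ℤ) ^ j * ((2 ^ (r - 1)).choose j : ℤ) with hD
    have heq : (((2 ^ r : ℕ)).choose (2 * j) : ℤ) + ((2 ^ r : ℕ) - 1 : ℤ) * D
        = ((((2 ^ r : ℕ)).choose (2 * j) : ℤ) - D) + ((2 ^ r : ℕ) : ℤ) * D := by ring
    rw [heq]
    refine dvd_add ?_ (dvd_mul_right _ _)
    have : ((2 ^ r : ℕ) : ℤ) = (2 : ℤ) ^ r := by push_cast; ring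
    rw [this]
    convert key using 2
  · intro i hio _ _
    subst hn
    exact_mod_cast Int.natCast_dvd_natCast.mpr (lemA r i hio)
end

section
/- Let C ⊆ 𝔽₂^{2ν+1} be a perfect code of length n−1 = 2ν+1 (minimum distance 3, covering radius 1) containing the all-zero word, where n = 2ν+2 = 2^r. Then the number of codewords of C of weight i equals (C(n−1, i) + (n−1)·Δ_i)/n, where Δ_i = C(ν, ⌊i/2⌋) if i ≡ 0,3 (mod 4) and Δ_i = −C(ν, ⌊i/2⌋) if i ≡ 1,2 (mod 4). -/
section Aux

open Finset

lemma zmod2_cases' (a : ZMod 2) : a = 0 ∨ a = 1 := by revert a; decide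
lemma zmod2_ne' (a b : ZMod 2) : a ≠ b ↔ a = b + 1 := by revert a b; decide

lemma card_weight' (m i : ℕ) :
    (Finset.univ.filter fun x : Fin m → ZMod 2 => hammingNorm x = i).card = m.choose i := by
  classical
  have h1 : m.choose i = (Finset.powersetCard i (Finset.univ : Finset (Fin m))).card := by
    rw [Finset.card_powersetCard, Finset.card_univ, Fintype.card_fin]
  rw [h1]
  apply Finset.card_nbij' (i := fun x => Finset.univ.filter fun j => x j ≠ 0)
    (j := fun s j => if j ∈ s then 1 else 0)
  · intro x hx
    simp only [Finset.mem_coe, Finset.mem_filter, Finset.mem_univ, true_and] at hx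
    simpa [Finset.mem_powersetCard, hammingNorm] using hx
  · intro s hs
    simp only [Finset.mem_coe, Finset.mem_powersetCard] at hs
    simp only [Finset.mem_coe, Finset.mem_filter, Finset.mem_univ, true_and, hammingNorm]
    rw [← hs.2]
    congr 1
    ext j
    simp
  · intro x hx
    ext j
    rcases zmod2_cases' (x j) with h | h <;> simp [h]
  · intro s hs
    ext j
    by_cases h : j ∈ s <;> simp [h]

lemma wt_update' {m : ℕ} (c : Fin m → ZMod 2) (j : Fin m) :
    hammingNorm (Function.update c j (c j + 1)) =
      if c j = 0 then hammingNorm c + 1 else hammingNorm c - 1 := by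
  classical
  unfold hammingNorm
  rcases zmod2_cases' (c j) with h | h
  · rw [if_pos h]
    have hset : (Finset.univ.filter fun k => Function.update c j (c j + 1) k ≠ 0)
        = insert j (Finset.univ.filter fun k => c k ≠ 0) := by
      ext k
      by_cases hk : k = j
      · subst hk; simp [Function.update_self, h]
      · simp [Function.update_of_ne hk, hk]
    rw [hset, Finset.card_insert_of_notMem (by simp [h])]
  · rw [if_neg (by simp [h])]
    have hset : (Finset.univ.filter fun k => Function.update c j (c j + 1) k ≠ 0)
        = (Finset.univ.filter fun k => c k ≠ 0).erase j := by
      ext k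
      by_cases hk : k = j
      · subst hk; simp [Function.update_self, h, show (1+1:ZMod 2)=0 by decide]
      · simp [Function.update_of_ne hk, hk]
    rw [hset, Finset.card_erase_of_mem (by simp [h])]

lemma card_zeros' {m : ℕ} (c : Fin m → ZMod 2) :
    (Finset.univ.filter fun j => c j = 0).card = m - hammingNorm c := by
  classical
  have := Finset.card_filter_add_card_filter_not
    (s := (Finset.univ : Finset (Fin m))) (p := fun j => c j = 0)
  simp only [Finset.card_univ, Fintype.card_fin] at this
  have h2 : (Finset.univ.filter fun j => ¬ c j = 0).card = hammingNorm c := rfl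
  omega

lemma flip_dist' {m : ℕ} (c : Fin m → ZMod 2) (j : Fin m) :
    hammingDist (Function.update c j (c j + 1)) c = 1 := by
  classical
  unfold hammingDist
  rw [Finset.card_eq_one]
  refine ⟨j, ?_⟩
  ext k
  by_cases hk : k = j
  · subst hk
    simp only [Finset.mem_filter, Finset.mem_univ, true_and, Finset.mem_singleton,
      Function.update_self]
    constructor
    · intro; trivial
    · intro; exact (zmod2_ne' _ _).mpr rfl
  · simp [Function.update_of_ne hk, hk]

lemma flip_inj' {m : ℕ} (c : Fin m → ZMod 2) :
    Function.Injective (fun j : Fin m => Function.update c j (c j + 1)) := by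
  intro j j' h
  by_contra hne
  have h1 := congrFun h j
  simp only [Function.update_self, Function.update_of_ne hne] at h1
  exact ((zmod2_ne' (c j + 1) (c j)).mpr rfl) h1

lemma ball_count' {m : ℕ} (c : Fin m → ZMod 2) (i : ℕ) :
    (Finset.univ.filter fun x : Fin m → ZMod 2 =>
        hammingDist x c ≤ 1 ∧ hammingNorm x = i).card =
      (if hammingNorm c = i then 1 else 0) +
        ((if hammingNorm c = i + 1 then hammingNorm c else 0) +
          (if hammingNorm c + 1 = i then m - hammingNorm c else 0)) := by
  classical
  set P : (Fin m → ZMod 2) → Prop := fun x => hammingDist x c ≤ 1 ∧ hammingNorm x = i with hP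
  rw [← Finset.card_filter_add_card_filter_not
    (s := Finset.univ.filter P) (p := fun x => x = c)]
  have h1 : ((Finset.univ.filter P).filter (fun x => x = c)).card
      = if hammingNorm c = i then 1 else 0 := by
    have hs : (Finset.univ.filter P).filter (fun x => x = c)
        = if hammingNorm c = i then ({c} : Finset _) else ∅ := by
      split_ifs with h
      · ext x
        simp only [Finset.mem_filter, Finset.mem_univ, true_and, Finset.mem_singleton, hP]
        constructor
        · rintro ⟨-, rfl⟩; rfl
        · rintro rfl; exact ⟨⟨by simp, h⟩, rfl⟩
      · ext x
        simp only [Finset.mem_filter, Finset.mem_univ, true_and, Finset.notMem_empty,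
          iff_false, hP, not_and]
        rintro ⟨-, hx⟩ rfl
        exact h hx
    rw [hs]
    split_ifs <;> simp
  have h2 : ((Finset.univ.filter P).filter (fun x => ¬ x = c)).card
      = (if hammingNorm c = i + 1 then hammingNorm c else 0) +
          (if hammingNorm c + 1 = i then m - hammingNorm c else 0) := by
    have himg : (Finset.univ.filter P).filter (fun x => ¬ x = c)
        = (Finset.univ.filter fun j : Fin m =>
            hammingNorm (Function.update c j (c j + 1)) = i).image
            (fun j => Function.update c j (c j + 1)) := by
      ext x
      simp only [Finset.mem_filter, Finset.mem_univ, true_and, Finset.mem_image, hP]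
      constructor
      · rintro ⟨⟨hd, hwt⟩, hne⟩
        have hd1 : hammingDist x c = 1 := by
          have : hammingDist x c ≠ 0 := by rwa [hammingDist_ne_zero]
          omega
        obtain ⟨j, hj⟩ := Finset.card_eq_one.mp hd1
        have hxj : x = Function.update c j (c j + 1) := by
          funext k
          by_cases hk : k = j
          · subst hk
            have hmem : k ∈ (Finset.univ.filter fun t => x t ≠ c t) := by
              rw [hj]; exact Finset.mem_singleton_self _
            simp only [Finset.mem_filter, Finset.mem_univ, true_and] at hmem
            rw [Function.update_self, ← zmod2_ne']
            exact hmem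
          · have hmem : k ∉ (Finset.univ.filter fun t => x t ≠ c t) := by
              rw [hj]; simpa using hk
            simp only [Finset.mem_filter, Finset.mem_univ, true_and, not_not] at hmem
            rw [Function.update_of_ne hk]
            exact hmem
        exact ⟨j, by rw [← hxj]; exact hwt, hxj.symm⟩
      · rintro ⟨j, hj, rfl⟩
        refine ⟨⟨le_of_eq (flip_dist' c j), hj⟩, ?_⟩
        intro hc
        have := flip_dist' c j
        rw [hc] at this
        simp at this
    rw [himg, Finset.card_image_of_injective _ (flip_inj' c)]
    rw [← Finset.card_filter_add_card_filter_not
      (s := Finset.univ.filter fun j : Fin m =>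
        hammingNorm (Function.update c j (c j + 1)) = i) (p := fun j => c j = 0)]
    have hz : ((Finset.univ.filter fun j : Fin m =>
        hammingNorm (Function.update c j (c j + 1)) = i).filter (fun j => c j = 0)).card
        = if hammingNorm c + 1 = i then m - hammingNorm c else 0 := by
      have hset : ((Finset.univ.filter fun j : Fin m =>
          hammingNorm (Function.update c j (c j + 1)) = i).filter (fun j => c j = 0))
          = if hammingNorm c + 1 = i then (Finset.univ.filter fun j => c j = 0) else ∅ := by
        split_ifs with h
        · ext j
          simp only [Finset.mem_filter, Finset.mem_univ, true_and, and_iff_right_iff_imp]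
          intro hj
          rw [wt_update', if_pos hj]
          exact h
        · ext j
          simp only [Finset.mem_filter, Finset.mem_univ, true_and, Finset.notMem_empty,
            iff_false, not_and]
          intro hwt hj
          rw [wt_update', if_pos hj] at hwt
          exact h hwt
      rw [hset]
      split_ifs
      · exact card_zeros' c
      · simp
    have hnz : ((Finset.univ.filter fun j : Fin m =>
        hammingNorm (Function.update c j (c j + 1)) = i).filter (fun j => ¬ c j = 0)).card
        = if hammingNorm c = i + 1 then hammingNorm c else 0 := by
      have hset : ((Finset.univ.filter fun j : Fin m =>
          hammingNorm (Function.update c j (c j + 1)) = i).filter (fun j => ¬ c j = 0))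
          = if hammingNorm c = i + 1 then (Finset.univ.filter fun j => ¬ c j = 0) else ∅ := by
        split_ifs with h
        · ext j
          simp only [Finset.mem_filter, Finset.mem_univ, true_and, and_iff_right_iff_imp]
          intro hj
          rw [wt_update', if_neg hj, h]
          omega
        · ext j
          simp only [Finset.mem_filter, Finset.mem_univ, true_and, Finset.notMem_empty,
            iff_false, not_and]
          intro hwt hj
          rw [wt_update', if_neg hj] at hwt
          have hpos : 0 < hammingNorm c := by
            refine Finset.card_pos.mpr ⟨j, ?_⟩
            simp [hj]
          omega
      rw [hset]
      split_ifs
      · rfl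
      · simp
    omega
  omega

lemma counting' {m : ℕ} (C : Finset (Fin m → ZMod 2))
    (hmin : ∀ c₁ ∈ C, ∀ c₂ ∈ C, c₁ ≠ c₂ → 3 ≤ hammingDist c₁ c₂)
    (hcov : ∀ x : Fin m → ZMod 2, ∃ c ∈ C, hammingDist x c ≤ 1) (j : ℕ) :
    m.choose (j+1) =
      (m - j) * (C.filter fun c => hammingNorm c = j).card
      + (C.filter fun c => hammingNorm c = j+1).card
      + (j+2) * (C.filter fun c => hammingNorm c = j+2).card := by
  classical
  have hpart : (Finset.univ.filter fun x : Fin m → ZMod 2 => hammingNorm x = j+1)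
      = C.biUnion (fun c => Finset.univ.filter fun x =>
          hammingDist x c ≤ 1 ∧ hammingNorm x = j+1) := by
    ext x
    simp only [Finset.mem_filter, Finset.mem_univ, true_and, Finset.mem_biUnion]
    constructor
    · intro h
      obtain ⟨c, hc, hd⟩ := hcov x
      exact ⟨c, hc, hd, h⟩
    · rintro ⟨c, -, -, h⟩
      exact h
  have hdisj : ∀ c₁ ∈ C, ∀ c₂ ∈ C, c₁ ≠ c₂ →
      Disjoint (Finset.univ.filter fun x => hammingDist x c₁ ≤ 1 ∧ hammingNorm x = j+1)
        (Finset.univ.filter fun x => hammingDist x c₂ ≤ 1 ∧ hammingNorm x = j+1) := by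
    intro c₁ h₁ c₂ h₂ hne
    rw [Finset.disjoint_left]
    intro x hx₁ hx₂
    simp only [Finset.mem_filter, Finset.mem_univ, true_and] at hx₁ hx₂
    have h3 := hmin c₁ h₁ c₂ h₂ hne
    have ht : hammingDist c₁ c₂ ≤ hammingDist c₁ x + hammingDist x c₂ :=
      hammingDist_triangle _ _ _
    rw [hammingDist_comm c₁ x] at ht
    omega
  have hcard := Finset.card_biUnion hdisj
  rw [← hpart, card_weight'] at hcard
  rw [hcard]
  have hsum : ∀ c ∈ C, (Finset.univ.filter fun x =>
      hammingDist x c ≤ 1 ∧ hammingNorm x = j+1).card =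
      (if hammingNorm c = j+1 then 1 else 0) +
        ((if hammingNorm c = j + 2 then hammingNorm c else 0) +
          (if hammingNorm c = j then m - hammingNorm c else 0)) := by
    intro c _
    have hiff : (hammingNorm c + 1 = j + 1) ↔ (hammingNorm c = j) := by omega
    rw [ball_count', if_congr hiff rfl rfl]
  rw [Finset.sum_congr rfl hsum]
  rw [Finset.sum_add_distrib, Finset.sum_add_distrib]
  have e1 : (∑ c ∈ C, if hammingNorm c = j+1 then 1 else 0)
      = (C.filter fun c => hammingNorm c = j+1).card := by
    simp [Finset.sum_ite_eq]
  have e2 : (∑ c ∈ C, if hammingNorm c = j + 2 then hammingNorm c else 0)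
      = (j+2) * (C.filter fun c => hammingNorm c = j+2).card := by
    rw [← Finset.sum_filter]
    rw [Finset.sum_congr rfl (fun c hc => (Finset.mem_filter.mp hc).2)]
    rw [Finset.sum_const, smul_eq_mul, mul_comm]
  have e3 : (∑ c ∈ C, if hammingNorm c = j then m - hammingNorm c else 0)
      = (m - j) * (C.filter fun c => hammingNorm c = j).card := by
    rw [← Finset.sum_filter]
    rw [Finset.sum_congr rfl (fun c hc => by rw [(Finset.mem_filter.mp hc).2])]
    rw [Finset.sum_const, smul_eq_mul, mul_comm]
  rw [e1, e2, e3]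
  ring

lemma int_choose_id' (m k : ℕ) :
    ((k : ℤ) + 1) * (m.choose (k+1)) = ((m : ℤ) - k) * m.choose k := by
  rcases le_or_gt k m with h | h
  · have hid := Nat.choose_succ_right_eq m k
    have hcast : ((m - k : ℕ) : ℤ) = (m : ℤ) - k := by
      rw [Int.ofNat_sub h]
    have := congrArg (fun t : ℕ => (t : ℤ)) hid
    push_cast at this
    rw [hcast] at this
    linarith
  · rw [Nat.choose_eq_zero_of_lt h, Nat.choose_eq_zero_of_lt (by omega)]
    simp

lemma delta_eval_pos' (ν a : ℕ) (h : a % 4 = 0 ∨ a % 4 = 3) (b : ℕ) (hb : a / 2 = b) :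
    Delta ν a = (ν.choose b : ℤ) := by
  unfold Delta; rw [if_pos h, hb]

lemma delta_eval_neg' (ν a : ℕ) (h : ¬(a % 4 = 0 ∨ a % 4 = 3)) (b : ℕ) (hb : a / 2 = b) :
    Delta ν a = -(ν.choose b : ℤ) := by
  unfold Delta; rw [if_neg h, hb]

lemma delta_rec' (ν j : ℕ) :
    ((j : ℤ) + 2) * Delta ν (j+2) + Delta ν (j+1) + ((2*ν+1 : ℤ) - j) * Delta ν j = 0 := by
  have h4 : j % 4 = 0 ∨ j % 4 = 1 ∨ j % 4 = 2 ∨ j % 4 = 3 := by omega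
  rcases h4 with h | h | h | h
  · obtain ⟨k, rfl⟩ : ∃ k, j = 4*k := ⟨j / 4, by omega⟩
    rw [delta_eval_neg' ν (4*k+2) (by omega) (2*k+1) (by omega),
      delta_eval_neg' ν (4*k+1) (by omega) (2*k) (by omega),
      delta_eval_pos' ν (4*k) (by omega) (2*k) (by omega)]
    have H := int_choose_id' ν (2*k)
    push_cast at H ⊢
    linear_combination (-2 : ℤ) * H
  · obtain ⟨k, rfl⟩ : ∃ k, j = 4*k+1 := ⟨j / 4, by omega⟩
    rw [delta_eval_pos' ν (4*k+3) (by omega) (2*k+1) (by omega),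
      delta_eval_neg' ν (4*k+2) (by omega) (2*k+1) (by omega),
      delta_eval_neg' ν (4*k+1) (by omega) (2*k) (by omega)]
    have H := int_choose_id' ν (2*k)
    push_cast at H ⊢
    linear_combination (2 : ℤ) * H
  · obtain ⟨k, rfl⟩ : ∃ k, j = 4*k+2 := ⟨j / 4, by omega⟩
    rw [show 4*k+2+2 = 4*(k+1) by ring, delta_eval_pos' ν (4*(k+1)) (by omega) (2*k+2) (by omega),
      delta_eval_pos' ν (4*k+3) (by omega) (2*k+1) (by omega),
      delta_eval_neg' ν (4*k+2) (by omega) (2*k+1) (by omega)]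
    have H := int_choose_id' ν (2*k+1)
    rw [show 2*k+1+1 = 2*k+2 from by omega] at H
    push_cast at H ⊢
    linear_combination (2 : ℤ) * H
  · obtain ⟨k, rfl⟩ : ∃ k, j = 4*k+3 := ⟨j / 4, by omega⟩
    rw [show 4*k+3+2 = 4*k+5 by ring, delta_eval_neg' ν (4*k+5) (by omega) (2*k+2) (by omega),
      show 4*k+3+1 = 4*(k+1) by ring, delta_eval_pos' ν (4*(k+1)) (by omega) (2*k+2) (by omega),
      delta_eval_pos' ν (4*k+3) (by omega) (2*k+1) (by omega)]
    have H := int_choose_id' ν (2*k+1)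
    rw [show 2*k+1+1 = 2*k+2 from by omega] at H
    push_cast at H ⊢
    linear_combination (-2 : ℤ) * H

end Aux

theorem stmt_7 (r ν n : ℕ) (hr : 2 ≤ r) (hn : n = 2 * ν + 2) (hn2 : n = 2 ^ r)
    (C : Finset (Fin (2 * ν + 1) → ZMod 2)) (h0 : (0 : Fin (2 * ν + 1) → ZMod 2) ∈ C)
    (hmin : ∀ c₁ ∈ C, ∀ c₂ ∈ C, c₁ ≠ c₂ → 3 ≤ hammingDist c₁ c₂)
    (hcov : ∀ x : Fin (2 * ν + 1) → ZMod 2, ∃ c ∈ C, hammingDist x c ≤ 1) :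
    ∀ i : ℕ, (((C.filter fun c => hammingNorm c = i).card : ℤ)) * n =
      ((n - 1).choose i : ℤ) + (n - 1) * Delta ν i := by
  classical
  subst hn
  set B : ℕ → ℕ := fun i => (C.filter fun c => hammingNorm c = i).card with hB
  set P : ℕ → Prop := fun i => (B i : ℤ) * (2*(ν:ℤ)+2)
      = ((2*ν+1).choose i : ℤ) + (2*(ν:ℤ)+1) * Delta ν i with hPdef
  have hB0 : B 0 = 1 := by
    have : (C.filter fun c => hammingNorm c = 0) = {0} := by
      ext c
      simp only [Finset.mem_filter, Finset.mem_singleton, hammingNorm_eq_zero]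
      constructor
      · exact fun h => h.2
      · rintro rfl; exact ⟨h0, rfl⟩
    simp only [hB, this, Finset.card_singleton]
  have hB1 : B 1 = 0 := by
    rw [hB]
    rw [Finset.card_eq_zero, Finset.filter_eq_empty_iff]
    intro c hc hwt
    have hne : c ≠ 0 := by
      intro h
      rw [h, hammingNorm_zero] at hwt
      exact absurd hwt (by omega)
    have h3 := hmin c hc 0 h0 hne
    rw [hammingDist_zero_right, hwt] at h3
    omega
  have hBbig : ∀ k, 2*ν+1 < k → B k = 0 := by
    intro k hk
    rw [hB, Finset.card_eq_zero, Finset.filter_eq_empty_iff]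
    intro c _ hwt
    have := hammingNorm_le_card_fintype (x := c)
    rw [Fintype.card_fin] at this
    omega
  have hP0 : P 0 := by
    rw [hPdef]
    simp only [hB0, Nat.choose_zero_right,
      delta_eval_pos' ν 0 (by omega) 0 (by omega), Nat.choose_zero_right]
    push_cast
    ring
  have hP1 : P 1 := by
    rw [hPdef]
    simp only [hB1, Nat.choose_one_right,
      delta_eval_neg' ν 1 (by omega) 0 (by omega), Nat.choose_zero_right]
    push_cast
    ring
  have step : ∀ j, P j → P (j+1) → P (j+2) := by
    intro j hj hj1
    rw [hPdef] at hj hj1 ⊢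
    have hc : (2*ν+1).choose (j+1) =
        (2*ν+1 - j) * B j + B (j+1) + (j+2) * B (j+2) :=
      counting' C hmin hcov j
    have hcz : ((2*ν+1).choose (j+1) : ℤ)
        = ((2*(ν:ℤ)+1) - j) * B j + B (j+1) + ((j:ℤ)+2) * B (j+2) := by
      rcases le_or_gt j (2*ν+1) with h | h
      · have := congrArg (fun t : ℕ => (t : ℤ)) hc
        push_cast at this
        have hcast : ((2*ν+1 - j : ℕ) : ℤ) = (2*(ν:ℤ)+1) - j := by
          push_cast [Int.ofNat_sub h]
          ring
        rw [hcast] at this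
        linarith
      · have hBj : B j = 0 := hBbig j h
        have hsub : 2*ν+1 - j = 0 := by omega
        rw [hBj, hsub] at hc
        have := congrArg (fun t : ℕ => (t : ℤ)) hc
        push_cast at this
        have hBjz : ((B j : ℤ)) = 0 := by exact_mod_cast hBj
        rw [hBjz]
        linarith
    have e1 := int_choose_id' (2*ν+1) j
    have e2 := int_choose_id' (2*ν+1) (j+1)
    have e3 := delta_rec' ν j
    rw [show j+1+1 = j+2 from by omega] at e2
    have key : ((j:ℤ)+2) * ((B (j+2) : ℤ) * (2*(ν:ℤ)+2))
        = ((j:ℤ)+2) * (((2*ν+1).choose (j+2) : ℤ) + (2*(ν:ℤ)+1) * Delta ν (j+2)) := by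
      push_cast at hcz hj hj1 e1 e2 e3 ⊢
      linear_combination (-(2*(ν:ℤ)+2)) * hcz - ((2*(ν:ℤ)+1) - (j:ℤ)) * hj - hj1
        + e1 - e2 - (2*(ν:ℤ)+1) * e3
    have hne : ((j:ℤ)+2) ≠ 0 := by positivity
    exact mul_left_cancel₀ hne key
  have main : ∀ j : ℕ, P j ∧ P (j+1) := by
    intro j
    induction j with
    | zero => exact ⟨hP0, hP1⟩
    | succ j ih => exact ⟨ih.2, step j ih.1 ih.2⟩
  intro i
  have hPi := (main i).1
  rw [hPdef] at hPi
  have h21 : 2*ν+2-1 = 2*ν+1 := by omega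
  rw [h21]
  push_cast at hPi ⊢
  linarith
end

section
/- Let C ⊆ 𝔽₂ᵐ be a diamond code: every codeword has exactly 2 codewords at Hamming distance 1 from it, and every non-codeword has exactly 1 codeword at distance 1 from it. Then C contains equally many codewords of even Hamming weight as of odd Hamming weight. -/
lemma normCast_aux (m : ℕ) (z : Fin m → ZMod 2) :
    ((hammingNorm z : ℕ) : ZMod 2) = ∑ i, z i := by
  rw [hammingNorm, Finset.card_filter]
  push_cast
  apply Finset.sum_congr rfl
  intro i _
  generalize z i = a
  revert a; decide

lemma parity_aux (m : ℕ) (x y : Fin m → ZMod 2) (h : hammingDist x y = 1) :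
    Even (hammingNorm x) ↔ Odd (hammingNorm y) := by
  have hd : hammingDist x y = hammingNorm (x - y) := by
    rw [hammingDist_comm, hammingDist_eq_hammingNorm, neg_add_eq_sub]
  have hsub : ∀ a b : ZMod 2, a - b = a + b := by decide
  have hcast : ((hammingNorm x + hammingNorm y : ℕ) : ZMod 2) = 1 := by
    push_cast
    rw [normCast_aux, normCast_aux]
    have : ((hammingDist x y : ℕ) : ZMod 2) = 1 := by rw [h]; norm_num
    rw [hd, normCast_aux] at this
    rw [← this, ← Finset.sum_add_distrib]
    apply Finset.sum_congr rfl
    intro i _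
    simp [hsub]
  have hmod : (hammingNorm x + hammingNorm y) % 2 = 1 := by
    rcases Nat.mod_two_eq_zero_or_one (hammingNorm x + hammingNorm y) with h0 | h1
    · exfalso
      rw [← ZMod.natCast_mod, h0] at hcast
      exact absurd hcast (by decide)
    · exact h1
  rw [Nat.even_iff, Nat.odd_iff]
  omega

theorem stmt_10 (m : ℕ) (C : Finset (Fin m → ZMod 2))
    (h11 : ∀ c ∈ C, (C.filter fun c' => hammingDist c c' = 1).card = 2)
    (h21 : ∀ x : Fin m → ZMod 2, x ∉ C → (C.filter fun c => hammingDist x c = 1).card = 1) :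
    (C.filter fun c => Even (hammingNorm c)).card
      = (C.filter fun c => Odd (hammingNorm c)).card := by
  classical
  set E := C.filter fun c => Even (hammingNorm c) with hE
  set O := C.filter fun c => Odd (hammingNorm c) with hO
  -- for even c, all distance-1 codeword neighbors are odd
  have hfE : ∀ c ∈ E, (O.filter fun c' => hammingDist c c' = 1)
      = C.filter fun c' => hammingDist c c' = 1 := by
    intro c hc
    rw [hE, Finset.mem_filter] at hc
    rw [hO, Finset.filter_filter]
    apply Finset.filter_congr
    intro c' _
    constructor
    · rintro ⟨_, h⟩; exact h
    · intro h; exact ⟨(parity_aux m c c' h).mp hc.2, h⟩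
  have hfO : ∀ c ∈ O, (E.filter fun c' => hammingDist c c' = 1)
      = C.filter fun c' => hammingDist c c' = 1 := by
    intro c hc
    rw [hO, Finset.mem_filter] at hc
    rw [hE, Finset.filter_filter]
    apply Finset.filter_congr
    intro c' _
    constructor
    · rintro ⟨_, h⟩; exact h
    · intro h
      exact ⟨(parity_aux m c' c (by rwa [hammingDist_comm])).mpr hc.2, h⟩
  have hEsub : ∀ c ∈ E, c ∈ C := fun c hc => (Finset.mem_filter.mp hc).1
  have hOsub : ∀ c ∈ O, c ∈ C := fun c hc => (Finset.mem_filter.mp hc).1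
  have h1 : ∑ c ∈ E, (O.filter fun c' => hammingDist c c' = 1).card = 2 * E.card := by
    have step : ∀ c ∈ E, (O.filter fun c' => hammingDist c c' = 1).card = 2 := fun c hc => by
      rw [hfE c hc]; exact h11 c (hEsub c hc)
    rw [Finset.sum_congr rfl step, Finset.sum_const, smul_eq_mul, mul_comm]
  have h2 : ∑ c ∈ O, (E.filter fun c' => hammingDist c c' = 1).card = 2 * O.card := by
    have step : ∀ c ∈ O, (E.filter fun c' => hammingDist c c' = 1).card = 2 := fun c hc => by
      rw [hfO c hc]; exact h11 c (hOsub c hc)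
    rw [Finset.sum_congr rfl step, Finset.sum_const, smul_eq_mul, mul_comm]
  have hswap : ∑ c ∈ E, (O.filter fun c' => hammingDist c c' = 1).card
      = ∑ c ∈ O, (E.filter fun c' => hammingDist c c' = 1).card := by
    simp only [Finset.card_filter]
    rw [Finset.sum_comm]
    apply Finset.sum_congr rfl
    intro c _
    apply Finset.sum_congr rfl
    intro c' _
    rw [hammingDist_comm]
  have : 2 * E.card = 2 * O.card := by rw [← h1, hswap, h2]
  omega
end

section
/- Let n = 2^r with r ≥ 2, ν = 2^{r−1} − 1, and Δ_i defined as ±C(ν, ⌊i/2⌋) with sign + if i ≡ 0,3 (mod 4) and − if i ≡ 1,2 (mod 4). Then for every even i with 2 ≤ i ≤ n−2, the integer C(n,i) − (Δ_{i−1} + Δ_i) is divisible by n. -/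
open Polynomial

lemma dvd_mul_choose (m t : ℕ) (ht : 1 ≤ t) : m ∣ t * m.choose t := by
  rcases Nat.eq_zero_or_pos m with hm | hm
  · subst hm
    rcases t with _ | t'
    · omega
    · simp [Nat.choose_eq_zero_of_lt]
  obtain ⟨m', rfl⟩ := Nat.exists_eq_add_of_lt hm
  obtain ⟨t', rfl⟩ := Nat.exists_eq_add_of_lt ht
  have := Nat.add_one_mul_choose_eq m' t'
  exact ⟨m'.choose t', by simpa [Nat.succ_eq_add_one, Nat.add_comm, Nat.mul_comm] using this.symm⟩

lemma lemA_s19 (r t : ℕ) (hr : 1 ≤ r) (ht : 1 ≤ t) :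
    2 ^ r ∣ 2 ^ t * (2 ^ (r - 1)).choose t := by
  set m := 2 ^ (r - 1) with hm
  set a := t.factorization 2 with ha
  have htne : t ≠ 0 := by omega
  have hproj : 2 ^ a ∣ t := Nat.ordProj_dvd t 2
  have hprojle : 2 ^ a ≤ t := Nat.ordProj_le 2 htne
  have halt : a < 2 ^ a := (Nat.lt_two_pow_self (n := a))
  by_cases hcase : r - 1 ≤ a
  · -- t ≥ 2^a ≥ 2^(r-1) ≥ r
    have h1 : r ≤ 2 ^ (r - 1) := by
      have := (Nat.lt_two_pow_self (n := r - 1))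
      omega
    have h2 : 2 ^ (r-1) ≤ 2 ^ a := Nat.pow_le_pow_right (by norm_num) hcase
    exact Dvd.dvd.mul_right (pow_dvd_pow 2 (by omega)) _
  · -- a + 1 ≤ r - 1
    obtain ⟨u, hu⟩ := hproj
    have huodd : ¬ 2 ∣ u := by
      have := Nat.not_dvd_ordCompl Nat.prime_two htne
      rw [← ha, hu, Nat.mul_div_cancel_left u (Nat.two_pow_pos a)] at this; exact this
    have hdvd1 : m ∣ t * m.choose t := dvd_mul_choose m t ht
    have hsplit : (2:ℕ) ^ (r - 1) = 2 ^ a * 2 ^ (r - 1 - a) := by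
      rw [← pow_add]; congr 1; omega
    have hdvd2 : 2 ^ (r - 1 - a) ∣ u * m.choose t := by
      have : 2 ^ a * 2 ^ (r - 1 - a) ∣ 2 ^ a * (u * m.choose t) := by
        rw [← hsplit, ← hm, ← mul_assoc, ← hu]; exact hdvd1
      exact (Nat.mul_dvd_mul_iff_left (Nat.two_pow_pos a)).mp this
    have hcop : Nat.Coprime (2 ^ (r - 1 - a)) u :=
      Nat.Coprime.pow_left _ ((Nat.Prime.coprime_iff_not_dvd Nat.prime_two).mpr huodd)
    have hdvd3 : 2 ^ (r - 1 - a) ∣ m.choose t := hcop.dvd_of_dvd_mul_left hdvd2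
    have h4 : (2:ℕ) ^ r ∣ 2 ^ (a + 1) * 2 ^ (r - 1 - a) := by
      rw [← pow_add]; exact pow_dvd_pow 2 (by omega)
    exact h4.trans (Nat.mul_dvd_mul (pow_dvd_pow 2 (by omega)) hdvd3)

lemma lemB (r : ℕ) (hr : 1 ≤ r) (j : ℕ) :
    ((2:ℤ) ^ r) ∣ (((2 ^ r).choose (2 * j) : ℤ) - ((2 ^ (r - 1)).choose j : ℤ)) := by
  set m := 2 ^ (r - 1) with hm
  set R := ZMod (2 ^ r)
  -- polynomial identity
  have key : ((1 + X : R[X])) ^ (2 ^ r) = (1 + X ^ 2) ^ m := by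
    have h2r : ((1 + X : R[X])) ^ (2 ^ r) = (((1 + X : R[X])) ^ 2) ^ m := by
      rw [← pow_mul]
      congr 1
      rw [hm, ← pow_succ']
      congr 1
      omega
    rw [h2r]
    have hsq : ((1 + X : R[X])) ^ 2 = (1 + X ^ 2) + (2 : R[X]) * X := by ring
    rw [hsq, add_pow]
    rw [Finset.sum_eq_single m]
    · simp
    · intro b hb hbm
      have hb' : b < m := by
        simp only [Finset.mem_range] at hb; omega
      have h0 : ((2 ^ (m - b) * m.choose b : ℕ) : R) = 0 := by
        rw [ZMod.natCast_eq_zero_iff, ← Nat.choose_symm (le_of_lt hb')]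
        exact lemA_s19 r (m - b) hr (by omega)
      have hterm : ((1 + X ^ 2 : R[X])) ^ b * ((2 : R[X]) * X) ^ (m - b) * ((m.choose b : ℕ) : R[X])
          = (1 + X ^ 2) ^ b * X ^ (m - b) * (((2 ^ (m - b) * m.choose b : ℕ) : ℕ) : R[X]) := by
        push_cast
        ring
      rw [hterm]
      have h0' : (((2 ^ (m - b) * m.choose b : ℕ) : ℕ) : R[X]) = 0 := by
        rw [← map_natCast (Polynomial.C : R →+* R[X]), h0, map_zero]
      rw [h0', mul_zero]
    · intro h; simp at h
  have hco : (((2 ^ r).choose (2 * j) : R)) = ((m.choose j : R)) := by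
    have h1 := Polynomial.coeff_one_add_X_pow R (2 ^ r) (2 * j)
    have hexp : ((1 + X ^ 2 : R[X])) ^ m = Polynomial.expand R 2 ((1 + X) ^ m) := by
      rw [map_pow, map_add, map_one, Polynomial.expand_X]
    have h2 : ((1 + X ^ 2 : R[X]) ^ m).coeff (2 * j) = (m.choose j : R) := by
      rw [hexp, Polynomial.coeff_expand (by norm_num : 0 < 2)]
      simp [Nat.mul_div_cancel_left, Polynomial.coeff_one_add_X_pow]
    rw [← h1, key, h2]
  have := (ZMod.intCast_zmod_eq_zero_iff_dvd (((2 ^ r).choose (2 * j) : ℤ) - ((m.choose j : ℤ))) (2 ^ r)).mp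
  push_cast at this ⊢
  exact this (by rw [sub_eq_zero]; exact_mod_cast hco)

lemma lemC (r j : ℕ) (hj : j % 2 = 1) : 2 ^ (r - 1) ∣ (2 ^ (r - 1)).choose j := by
  have h := dvd_mul_choose (2 ^ (r - 1)) j (by omega)
  have hcop : Nat.Coprime (2 ^ (r - 1)) j :=
    Nat.Coprime.pow_left _ (by
      rw [Nat.Prime.coprime_iff_not_dvd Nat.prime_two]
      omega)
  exact hcop.dvd_of_dvd_mul_left h

theorem stmt_19 (r : ℕ) (hr : 2 ≤ r) (n ν : ℕ) (hn : n = 2 ^ r) (hν : ν = 2 ^ (r - 1) - 1) :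
    ∀ i : ℕ, Even i → 2 ≤ i → i ≤ n - 2 →
      (n : ℤ) ∣ ((n.choose i : ℤ) - (Delta ν (i - 1) + Delta ν i)) := by
  intro i hie hi2 hin
  obtain ⟨j, hj⟩ := hie
  have hij : i = 2 * j := by omega
  have hj1 : 1 ≤ j := by omega
  have hm1 : 1 ≤ 2 ^ (r - 1) := Nat.one_le_two_pow
  have hν1 : ν + 1 = 2 ^ (r - 1) := by omega
  -- Pascal
  have hpascal : ν.choose (j - 1) + ν.choose j = (2 ^ (r - 1)).choose j := by
    rw [← hν1]
    obtain ⟨j', rfl⟩ := Nat.exists_eq_add_of_lt hj1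
    simp only [Nat.zero_add, Nat.add_sub_cancel]
    rw [Nat.choose_succ_succ]
  have him1 : i - 1 = 2 * j - 1 := by omega
  have hdiv1 : (i - 1) / 2 = j - 1 := by omega
  have hdiv2 : i / 2 = j := by omega
  have hB := lemB r (by omega) j
  rcases Nat.even_or_odd j with hje | hjo
  · -- j even : Delta (i-1) = +C(ν,j-1), Delta i = +C(ν,j)
    have hj2 : j % 2 = 0 := Nat.even_iff.mp hje
    have hm4a : (i - 1) % 4 = 3 := by omega
    have hm4b : i % 4 = 0 := by omega
    rw [Delta, Delta, if_pos (Or.inr hm4a), if_pos (Or.inl hm4b), hdiv1, hdiv2]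
    have : ((ν.choose (j-1) : ℤ) + (ν.choose j : ℤ)) = ((2 ^ (r-1)).choose j : ℤ) := by
      exact_mod_cast congrArg (Nat.cast : ℕ → ℤ) hpascal
    rw [this, hn, hij]
    push_cast at hB ⊢
    exact hB
  · have hj2 : j % 2 = 1 := Nat.odd_iff.mp hjo
    have hm4a : (i - 1) % 4 = 1 := by omega
    have hm4b : i % 4 = 2 := by omega
    rw [Delta, Delta, if_neg (by omega), if_neg (by omega), hdiv1, hdiv2]
    have hps : ((ν.choose (j-1) : ℤ) + (ν.choose j : ℤ)) = ((2 ^ (r-1)).choose j : ℤ) := by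
      exact_mod_cast congrArg (Nat.cast : ℕ → ℤ) hpascal
    have hC : (2:ℤ) ^ r ∣ 2 * ((2 ^ (r-1)).choose j : ℤ) := by
      obtain ⟨c, hc⟩ := lemC r j hj2
      refine ⟨c, ?_⟩
      have : (2:ℤ) ^ r = 2 * 2 ^ (r - 1) := by
        rw [← pow_succ']
        congr 1
        omega
      rw [this, hc]
      push_cast
      ring
    have : (n.choose i : ℤ) - (-(ν.choose (j-1) : ℤ) + -(ν.choose j : ℤ))
        = ((n.choose i : ℤ) - ((2 ^ (r-1)).choose j : ℤ)) + 2 * ((2 ^ (r-1)).choose j : ℤ) := by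
      rw [← hps]; ring
    rw [this, hn, hij]
    push_cast at hB hC ⊢
    exact dvd_add hB hC
end
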